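/- For every m ∈ ℕ the unital *-homomorphism j^{(m)} preserves the marginal laws: Φ̃^{(m)} ∘ j₁^{(m)} = φ₁ on 𝒜₁ and Φ̃^{(m)} ∘ j₂^{(m)} = φ₂ on 𝒜₂. (Proposition 3.1) -/

import Mathlib

open scoped ComplexOrder TensorProduct

/-- `w` is a non-empty word in the generating set `G`. -/
def IsWord {R : Type*} [Monoid R] (G : Set R) (w : R) : Prop :=
  ∃ l : List R, l ≠ [] ∧ (∀ x ∈ l, x ∈ G) ∧ w = l.prod

/-- `φ` is a state on the unital complex *-algebra `R`. -/
def IsState {R : Type*} [Ring R] [Algebra ℂ R] [StarRing R] (φ : R →ₗ[ℂ] ℂ) : Prop :=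
  φ 1 = 1 ∧ ∀ x, 0 ≤ φ (x * star x)

/-- The ordered product `f a * f (a+1) * ⋯ * f b` (an empty product if `b < a`). -/
def ordProd {T : Type*} [Monoid T] (f : ℕ → T) (a b : ℕ) : T :=
  ((List.range' a (b + 1 - a)).map f).prod

/-- The element `t_{[k,m]}`: `g` at the tensor sites `k, …, m` (1-based), with the
convention `t_{[0,m]} = 0`. -/
def tBlock {T : Type*} [Ring T] (g : ℕ → T) (k m : ℕ) : T :=
  if k = 0 then 0 else ordProd g k m

/-- The embedding at tensor site `k` among the sites `1, …, m`, with value `0` out of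
range (the convention `i_{m+1,m}(a) = 0`). -/
def embSite {T R : Type*} [Ring T] (e : ℕ → R → T) (m k : ℕ) (x : R) : T :=
  if 1 ≤ k ∧ k ≤ m then e k x else 0

/-- `φt` is the Boolean extension of the state `φ` to the free product `S = R * ℂ[t]`
(with canonical embedding `ι : R → S` and separator `t`):  one has `φt 1 = 1` and
`φt (t^{e₀} w₁ t^{e₁} ⋯ wₙ t^{eₙ}) = φ(w₁) ⋯ φ(wₙ)` for all non-empty words `wᵢ` in the
generating set `G` and all exponents with `e₁, …, e_{n-1} > 0`. -/
def IsBooleanExt {R S : Type*} [Ring R] [Algebra ℂ R] [Ring S] [Algebra ℂ S]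
    (G : Set R) (ι : R → S) (t : S) (φ : R →ₗ[ℂ] ℂ) (φt : S →ₗ[ℂ] ℂ) : Prop :=
  φt 1 = 1 ∧
  ∀ (n : ℕ) (w : ℕ → R) (e : ℕ → ℕ),
    (∀ i < n, IsWord G (w i)) →
    (∀ i, 0 < i → i < n → 0 < e i) →
    φt (((List.range n).map fun i => t ^ e i * ι (w i)).prod * t ^ e n) =
      ((List.range n).map fun i => φ (w i)).prod

/- In the following, for `i : Fin 2`:
* `A i` plays the role of the unital free *-algebra `𝒜ᵢ₊₁` with generating set `G i`
  (closed under the involution), so that `A i` is generated by `G i`;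
* `B i` plays the role of `𝒜̃ᵢ₊₁ = 𝒜ᵢ₊₁ * ℂ[t]`, with canonical embedding `ι i` and with
  the hermitian separator `t i`, which together generate `B i`;
* `T` plays the role of the tensor product `𝒜̃^{(m)} = 𝒜̃₁^{⊗m} ⊗ 𝒜̃₂^{⊗m}`, with the
  canonical commuting embeddings `e i k : B i → T` onto the tensor sites `k = 1, …, m`
  (site `k` of block `i`), whose images generate `T`. -/

section Aux

variable {T : Type*} [Monoid T] (f g : ℕ → T)

lemma ordProd_empty (a b : ℕ) (h : b + 1 ≤ a) : ordProd f a b = 1 := by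
  unfold ordProd
  rw [Nat.sub_eq_zero_of_le h]
  simp

lemma ordProd_succ (a b : ℕ) (h : a ≤ b + 1) : ordProd f a (b + 1) = ordProd f a b * f (b + 1) := by
  unfold ordProd
  have h1 : b + 1 + 1 - a = (b + 1 - a) + 1 := by omega
  have h2 : a + 1 * (b + 1 - a) = b + 1 := by omega
  rw [h1, List.range'_concat, h2]
  simp

lemma ordProd_head (a b : ℕ) (h : a ≤ b) : ordProd f a b = f a * ordProd f (a + 1) b := by
  unfold ordProd
  have h1 : b + 1 - a = (b + 1 - (a + 1)) + 1 := by omega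
  rw [h1, List.range'_succ]
  simp

lemma ordProd_congr {f g : ℕ → T} (a b : ℕ) (h : ∀ l, a ≤ l → l ≤ b → f l = g l) :
    ordProd f a b = ordProd g a b := by
  unfold ordProd
  congr 1
  apply List.map_congr_left
  intro x hx
  rw [List.mem_range'_1] at hx
  exact h x hx.1 (by omega)

lemma ordProd_eq_one {f : ℕ → T} (a b : ℕ) (h : ∀ l, a ≤ l → l ≤ b → f l = 1) :
    ordProd f a b = 1 := by
  rw [ordProd_congr a b h]
  unfold ordProd
  exact List.prod_eq_one (by simp)

lemma Commute.ordProd_right (x : T) (a b : ℕ) (h : ∀ l, a ≤ l → l ≤ b → Commute x (f l)) :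
    Commute x (ordProd f a b) := by
  apply Commute.list_prod_right
  intro y hy
  simp only [List.mem_map, List.mem_range'_1] at hy
  obtain ⟨l, hl, rfl⟩ := hy
  exact h l hl.1 (by omega)

lemma ordProd_comm (a b a' b' : ℕ)
    (h : ∀ l l', a ≤ l → l ≤ b → a' ≤ l' → l' ≤ b' → Commute (f l) (g l')) :
    Commute (ordProd f a b) (ordProd g a' b') := by
  apply Commute.ordProd_right
  intro l' h1 h2
  exact (Commute.ordProd_right f (g l') a b (fun l hl1 hl2 => (h l l' hl1 hl2 h1 h2).symm)).symm

lemma ordProd_mul_single (x : T) (c m : ℕ) (hc1 : 1 ≤ c) (hcm : c ≤ m)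
    (hcomm : ∀ l, c < l → l ≤ m → Commute x (f l)) :
    ordProd f 1 m * x = ordProd (Function.update f c (f c * x)) 1 m := by
  induction m with
  | zero => omega
  | succ m ih =>
    rcases Nat.lt_or_ge c (m + 1) with hlt | hge
    · have hcm' : c ≤ m := by omega
      rw [ordProd_succ f 1 m (by omega), mul_assoc,
        ← (hcomm (m + 1) hlt le_rfl).eq, ← mul_assoc,
        ih hcm' (fun l hl hlm => hcomm l hl (by omega)),
        ordProd_succ _ 1 m (by omega), Function.update_of_ne (by omega)]
    · have hc : c = m + 1 := by omega
      subst hc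
      rw [ordProd_succ f 1 m (by omega), mul_assoc,
        ordProd_succ _ 1 m (by omega), Function.update_self]
      congr 1
      exact ordProd_congr 1 m (fun l h1 h2 => (Function.update_of_ne (by omega) _ _).symm)

lemma ordProd_mul_tail (k m : ℕ) (hk : 1 ≤ k)
    (hcomm : ∀ l l', l' < l → l ≤ m → Commute (f l) (g l')) :
    ordProd f 1 m * ordProd g k m =
      ordProd (fun l => if k ≤ l then f l * g l else f l) 1 m := by
  induction m with
  | zero =>
    rw [ordProd_empty f 1 0 (by omega), ordProd_empty g k 0 (by omega),
      ordProd_empty _ 1 0 (by omega), one_mul]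
  | succ m ih =>
    rcases Nat.lt_or_ge (m + 1) k with hlt | hge
    · rw [ordProd_empty g k (m + 1) (by omega), mul_one]
      exact ordProd_congr 1 (m + 1) (fun l h1 h2 => by rw [if_neg (by omega)])
    · rw [ordProd_succ f 1 m (by omega), ordProd_succ g k m hge,
        ordProd_succ _ 1 m (by omega), if_pos hge]
      have hc : Commute (f (m + 1)) (ordProd g k m) := by
        apply Commute.ordProd_right
        intro l hl1 hl2
        exact hcomm (m + 1) l (by omega) le_rfl
      calc ordProd f 1 m * f (m + 1) * (ordProd g k m * g (m + 1))
          = ordProd f 1 m * (f (m + 1) * ordProd g k m) * g (m + 1) := by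
            simp [mul_assoc]
        _ = ordProd f 1 m * ordProd g k m * (f (m + 1) * g (m + 1)) := by
            rw [hc.eq]; simp [mul_assoc]
        _ = _ := by
            rw [ih (fun l l' h1 h2 => hcomm l l' h1 (by omega))]

end Aux

lemma telescope_sum (V : ℕ → ℂ) (m : ℕ) :
    ∑ k ∈ Finset.Icc 1 m, (V k - V (k + 1)) = V 1 - V (m + 1) := by
  induction m with
  | zero => simp
  | succ m ih =>
    rw [Finset.sum_Icc_succ_top (by omega), ih]
    ring

section BoolAux

variable {R S : Type*} [Ring R] [Algebra ℂ R] [Ring S] [Algebra ℂ S]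
  {G : Set R} {ι : R → S} {t : S} {φ : R →ₗ[ℂ] ℂ} {φt : S →ₗ[ℂ] ℂ}

lemma IsBooleanExt.pow_eq_one (h : IsBooleanExt G ι t φ φt) (N : ℕ) : φt (t ^ N) = 1 := by
  have := h.2 0 (fun _ => 1) (fun _ => N) (by omega) (by omega)
  simpa using this

lemma IsBooleanExt.map_word (h : IsBooleanExt G ι t φ φt) {w : R} (hw : IsWord G w) :
    φt (ι w) = φ w := by
  have := h.2 1 (fun _ => w) (fun _ => 0) (fun i _ => hw) (by omega)
  simpa using this

lemma IsBooleanExt.map_closure (h : IsBooleanExt G ι t φ φt) (hφ1 : φ 1 = 1) (hι1 : ι 1 = 1)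
    {w : R} (hw : w ∈ Submonoid.closure G) : φt (ι w) = φ w := by
  obtain ⟨l, hl, rfl⟩ := Submonoid.exists_list_of_mem_closure hw
  rcases l with _ | ⟨a, l⟩
  · simpa [hι1, hφ1] using h.1
  · exact h.map_word ⟨a :: l, by simp, hl, rfl⟩

end BoolAux

/-- The abstract core computation: if `Φ` evaluates "normal forms" as products of states,
then `Φ` of a product of `J`-images of generators equals the state of the word. -/
lemma booleanKey {A T : Type*} [Monoid A] [Ring T]
    (m : ℕ) (hm : 1 ≤ m)
    (EA : ℕ → A →* T) (u : ℕ → T)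
    (hEE : ∀ k k', k ≠ k' → ∀ x y, Commute (EA k x) (EA k' y))
    (hEu : ∀ k l x, Commute (EA k x) (u l))
    (huu : ∀ l l', Commute (u l) (u l'))
    (Φ : T →+ ℂ) (φA ψA : A → ℂ) (S : Set A)
    (hval : ∀ X : ℕ → A, (∀ k, X k ∈ Submonoid.closure S) → ∀ N : ℕ → ℕ,
      Φ (ordProd (fun k => EA k (X k)) 1 m * ordProd (fun l => u l ^ N l) 1 m) =
        ordProd (fun k => if k = 1 then φA (X k) else ψA (X k)) 1 m)
    (J : A → T)
    (hJ : ∀ a ∈ S, J a = ∑ k ∈ Finset.Icc 1 m,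
      ((if 1 ≤ k ∧ k ≤ m then EA k a else 0) - (if 1 ≤ k + 1 ∧ k + 1 ≤ m then EA (k + 1) a else 0)) *
        ordProd u k m) :
    ∀ l : List A, (∀ a ∈ l, a ∈ S) →
      ∀ X : ℕ → A, (∀ k, X k ∈ Submonoid.closure S) → ∀ N : ℕ → ℕ,
      Φ (ordProd (fun k => EA k (X k)) 1 m * ordProd (fun l => u l ^ N l) 1 m *
          (l.map J).prod) =
        ordProd (fun k => if k = 1 then φA (Function.update X 1 (X 1 * l.prod) k)
          else ψA (Function.update X 1 (X 1 * l.prod) k)) 1 m := by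
  intro l
  induction l with
  | nil =>
    intro _ X hX N
    simp only [List.map_nil, List.prod_nil, mul_one, Function.update_eq_self]
    exact hval X hX N
  | cons a l ih =>
    intro hmem X hX N
    have haS : a ∈ S := hmem a (List.mem_cons_self (a := a) (l := l))
    have hlS : ∀ x ∈ l, x ∈ S := fun x hx => hmem x (List.mem_cons_of_mem a hx)
    -- notation
    set Z : T := ordProd (fun k => EA k (X k)) 1 m * ordProd (fun l => u l ^ N l) 1 m with hZdef
    set RR : T := (l.map J).prod with hRRdef
    set V : ℕ → ℂ := fun c => if c ≤ m then
      ordProd (fun k => if k = 1 then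
          φA (Function.update (Function.update X c (X c * a)) 1
            (Function.update X c (X c * a) 1 * l.prod) k)
        else ψA (Function.update (Function.update X c (X c * a)) 1
            (Function.update X c (X c * a) 1 * l.prod) k)) 1 m
      else 0 with hVdef
    have hstep : ∀ k, 1 ≤ k → k ≤ m → ∀ c, (c = k ∨ c = k + 1) →
        Φ (Z * ((if 1 ≤ c ∧ c ≤ m then EA c a else 0) * ordProd u k m) * RR) = V c := by
      intro k hk1 hkm c hc
      have hc1 : 1 ≤ c := by omega
      by_cases hcm : c ≤ m
      · rw [if_pos ⟨hc1, hcm⟩]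
        -- merge the new factor into the normal form
        have hpB : Commute (EA c a) (ordProd (fun l => u l ^ N l) 1 m) :=
          Commute.ordProd_right _ _ 1 m (fun l _ _ => (hEu c l a).pow_right _)
        have hZmul : Z * (EA c a * ordProd u k m) =
            ordProd (fun k' => EA k' (Function.update X c (X c * a) k')) 1 m *
              ordProd (fun l => u l ^ (N l + if k ≤ l then 1 else 0)) 1 m := by
          have e1 : Z * (EA c a * ordProd u k m) =
              (ordProd (fun k => EA k (X k)) 1 m * EA c a) *
                (ordProd (fun l => u l ^ N l) 1 m * ordProd u k m) := by
            rw [hZdef, mul_assoc, ← mul_assoc (ordProd (fun l => u l ^ N l) 1 m),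
              ← hpB.eq, mul_assoc, ← mul_assoc]
          rw [e1]
          congr 1
          · rw [ordProd_mul_single _ (EA c a) c m hc1 hcm
              (fun l hl hlm => hEE c l (by omega) a (X l))]
            refine ordProd_congr 1 m (fun l h1 h2 => ?_)
            by_cases hlc : l = c
            · subst hlc
              rw [Function.update_self, Function.update_self, map_mul]
            · rw [Function.update_of_ne hlc, Function.update_of_ne hlc]
          · rw [ordProd_mul_tail _ u k m hk1 (fun l l' _ _ => (huu l l').pow_left _)]
            refine ordProd_congr 1 m (fun l h1 h2 => ?_)
            by_cases hkl : k ≤ l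
            · rw [if_pos hkl, if_pos hkl, pow_succ]
            · rw [if_neg hkl, if_neg hkl, add_zero]
        have hX' : ∀ k', Function.update X c (X c * a) k' ∈ Submonoid.closure S := by
          intro k'
          by_cases hk' : k' = c
          · subst hk'
            rw [Function.update_self]
            exact mul_mem (hX k') (Submonoid.subset_closure haS)
          · rw [Function.update_of_ne hk']
            exact hX k'
        rw [hZmul]
        simp only [hVdef]
        rw [if_pos hcm]
        exact ih hlS (Function.update X c (X c * a)) hX' _
      · rw [if_neg (by omega)]
        simp only [zero_mul, mul_zero, map_zero, hVdef]
        rw [if_neg hcm]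
    -- expand the product
    rw [List.map_cons, List.prod_cons, ← mul_assoc, hJ a haS, Finset.mul_sum, Finset.sum_mul,
      map_sum]
    have hsummand : ∀ k ∈ Finset.Icc 1 m,
        Φ (Z * (((if 1 ≤ k ∧ k ≤ m then EA k a else 0) -
            (if 1 ≤ k + 1 ∧ k + 1 ≤ m then EA (k + 1) a else 0)) * ordProd u k m) * RR) =
          V k - V (k + 1) := by
      intro k hk
      rw [Finset.mem_Icc] at hk
      rw [sub_mul, mul_sub, sub_mul, map_sub,
        hstep k hk.1 hk.2 k (Or.inl rfl), hstep k hk.1 hk.2 (k + 1) (Or.inr rfl)]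
    rw [Finset.sum_congr rfl hsummand, telescope_sum]
    simp only [hVdef]
    rw [if_neg (show ¬ m + 1 ≤ m by omega), sub_zero, if_pos hm]
    refine ordProd_congr 1 m (fun k h1 h2 => ?_)
    have harr : Function.update (Function.update X 1 (X 1 * a)) 1
        (Function.update X 1 (X 1 * a) 1 * l.prod) =
        Function.update X 1 (X 1 * (a :: l).prod) := by
      rw [Function.update_self, Function.update_idem, List.prod_cons, mul_assoc]
    rw [harr]

theorem j_preserves_marginal_laws
    {A B : Fin 2 → Type*} {T : Type*}
    [∀ i, Ring (A i)] [∀ i, Algebra ℂ (A i)] [∀ i, StarRing (A i)] [∀ i, StarModule ℂ (A i)]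
    [∀ i, Ring (B i)] [∀ i, Algebra ℂ (B i)] [∀ i, StarRing (B i)] [∀ i, StarModule ℂ (B i)]
    [Ring T] [Algebra ℂ T] [StarRing T] [StarModule ℂ T]
    (G : ∀ i, Set (A i)) (hG : ∀ i, ∀ x ∈ G i, star x ∈ G i)
    (hA : ∀ i, Algebra.adjoin ℂ (G i) = ⊤)
    (ι : ∀ i, A i →⋆ₐ[ℂ] B i) (t : ∀ i, B i) (ht : ∀ i, star (t i) = t i)
    (hB : ∀ i, Algebra.adjoin ℂ (Set.range (ι i) ∪ {t i}) = ⊤)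
    (m : ℕ) (hm : 1 ≤ m)
    (e : ∀ i, ℕ → B i →⋆ₐ[ℂ] T)
    (hcomm : ∀ (i i' : Fin 2) (k k' : ℕ), (i, k) ≠ (i', k') →
      ∀ (x : B i) (y : B i'), Commute (e i k x) (e i' k' y))
    (hT : Algebra.adjoin ℂ
      {x : T | ∃ (i : Fin 2) (k : ℕ), 1 ≤ k ∧ k ≤ m ∧ ∃ b : B i, x = e i k b} = ⊤)
    -- the pairs of states `(φᵢ, ψᵢ)` on `A i` and their Boolean extensions `φt i`, `ψt i`
    (φ ψ : ∀ i, A i →ₗ[ℂ] ℂ) (hφ : ∀ i, IsState (φ i)) (hψ : ∀ i, IsState (ψ i))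
    (φt ψt : ∀ i, B i →ₗ[ℂ] ℂ)
    (hφt : ∀ i, IsBooleanExt (G i) (⇑(ι i)) (t i) (φ i) (φt i))
    (hψt : ∀ i, IsBooleanExt (G i) (⇑(ι i)) (t i) (ψ i) (ψt i))
    -- the tensor product state `Φ̃^{(m)} = φ̃₁ ⊗ ψ̃₁^{⊗(m-1)} ⊗ φ̃₂ ⊗ ψ̃₂^{⊗(m-1)}`
    (Φ : T →ₗ[ℂ] ℂ)
    (hΦ : ∀ (x : ℕ → B 0) (y : ℕ → B 1),
      Φ (ordProd (fun k => e 0 k (x k)) 1 m * ordProd (fun k => e 1 k (y k)) 1 m) =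
        ordProd (fun k => if k = 1 then φt 0 (x k) else ψt 0 (x k)) 1 m *
          ordProd (fun k => if k = 1 then φt 1 (y k) else ψt 1 (y k)) 1 m)
    -- the *-homomorphisms `j₁^{(m)}`, `j₂^{(m)}`, given on the generators by
    -- `j₁^{(m)}(a) = Σ_{k=1}^m (i_{k,m}(a) - i_{k+1,m}(a)) ⊗ t_{[k,m]}` and
    -- `j₂^{(m)}(b) = Σ_{k=1}^m t_{[k,m]} ⊗ (i_{k,m}(b) - i_{k+1,m}(b))`
    (j : ∀ i, A i →⋆ₐ[ℂ] T)
    (hj1 : ∀ a ∈ G 0, j 0 a = ∑ k ∈ Finset.Icc 1 m,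
      (embSite (fun l x => e 0 l x) m k (ι 0 a) - embSite (fun l x => e 0 l x) m (k + 1) (ι 0 a)) *
        tBlock (fun l => e 1 l (t 1)) k m)
    (hj2 : ∀ b ∈ G 1, j 1 b = ∑ k ∈ Finset.Icc 1 m,
      tBlock (fun l => e 0 l (t 0)) k m *
        (embSite (fun l x => e 1 l x) m k (ι 1 b) - embSite (fun l x => e 1 l x) m (k + 1) (ι 1 b)))
    :
    -- `Φ̃^{(m)} ∘ j₁^{(m)} = φ₁` and `Φ̃^{(m)} ∘ j₂^{(m)} = φ₂`
    (∀ x : A 0, Φ (j 0 x) = φ 0 x) ∧ (∀ y : A 1, Φ (j 1 y) = φ 1 y) := by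
  classical
  have h01 : ∀ k l : ℕ, ((0 : Fin 2), k) ≠ ((1 : Fin 2), l) := by
    intro k l h
    simp only [Prod.mk.injEq] at h
    exact absurd h.1 (by decide)
  have h10 : ∀ k l : ℕ, ((1 : Fin 2), k) ≠ ((0 : Fin 2), l) := by
    intro k l h
    simp only [Prod.mk.injEq] at h
    exact absurd h.1 (by decide)
  have hsame : ∀ (i : Fin 2) (k l : ℕ), k ≠ l → ((i, k) : Fin 2 × ℕ) ≠ (i, l) := by
    intro i k l h hcon
    exact h (congrArg Prod.snd hcon)
  -- the two one-site embeddings composed with the inclusions, as monoid homs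
  set EA0 : ℕ → A 0 →* T :=
    fun k => ((e 0 k).toAlgHom.toRingHom.toMonoidHom.comp (ι 0).toAlgHom.toRingHom.toMonoidHom)
    with hEA0def
  set EA1 : ℕ → A 1 →* T :=
    fun k => ((e 1 k).toAlgHom.toRingHom.toMonoidHom.comp (ι 1).toAlgHom.toRingHom.toMonoidHom)
    with hEA1def
  constructor
  · -- the first marginal
    have hEE0 : ∀ k k', k ≠ k' → ∀ x y, Commute (EA0 k x) (EA0 k' y) :=
      fun k k' h x y => hcomm 0 0 k k' (hsame 0 k k' h) _ _
    have hEu0 : ∀ k l x, Commute (EA0 k x) (e 1 l (t 1)) :=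
      fun k l x => hcomm 0 1 k l (h01 k l) _ _
    have huu1 : ∀ l l', Commute (e 1 l (t 1)) (e 1 l' (t 1)) := by
      intro l l'
      by_cases h : l = l'
      · subst h; exact Commute.refl _
      · exact hcomm 1 1 l l' (hsame 1 l l' h) _ _
    have hval0 : ∀ X : ℕ → A 0, (∀ k, X k ∈ Submonoid.closure (G 0)) → ∀ N : ℕ → ℕ,
        Φ.toAddMonoidHom (ordProd (fun k => EA0 k (X k)) 1 m *
            ordProd (fun l => e 1 l (t 1) ^ N l) 1 m) =
          ordProd (fun k => if k = 1 then φ 0 (X k) else ψ 0 (X k)) 1 m := by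
      intro X hX N
      show Φ (ordProd (fun k => e 0 k (ι 0 (X k))) 1 m *
            ordProd (fun l => e 1 l (t 1) ^ N l) 1 m) = _
      rw [show ordProd (fun l => e 1 l (t 1) ^ N l) 1 m
            = ordProd (fun l => e 1 l (t 1 ^ N l)) 1 m from
          ordProd_congr 1 m (fun l _ _ => (map_pow (e 1 l) (t 1) (N l)).symm)]
      rw [hΦ]
      rw [ordProd_eq_one 1 m (f := fun k => if k = 1 then φt 1 (t 1 ^ N k) else ψt 1 (t 1 ^ N k))
        (fun k _ _ => by
          by_cases hk : k = 1 <;>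
            simp [hk, (hφt 1).pow_eq_one, (hψt 1).pow_eq_one]), mul_one]
      refine ordProd_congr 1 m (fun k _ _ => ?_)
      by_cases hk : k = 1
      · rw [if_pos hk, if_pos hk]
        exact (hφt 0).map_closure (hφ 0).1 (map_one (ι 0)) (hX k)
      · rw [if_neg hk, if_neg hk]
        exact (hψt 0).map_closure (hψ 0).1 (map_one (ι 0)) (hX k)
    have hJ0 : ∀ a ∈ G 0, (fun x => j 0 x) a = ∑ k ∈ Finset.Icc 1 m,
        ((if 1 ≤ k ∧ k ≤ m then EA0 k a else 0) -
          (if 1 ≤ k + 1 ∧ k + 1 ≤ m then EA0 (k + 1) a else 0)) *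
          ordProd (fun l => e 1 l (t 1)) k m := by
      intro a ha
      refine (hj1 a ha).trans ?_
      refine Finset.sum_congr rfl (fun k hk => ?_)
      rw [Finset.mem_Icc] at hk
      rw [show tBlock (fun l => e 1 l (t 1)) k m = ordProd (fun l => e 1 l (t 1)) k m from
        if_neg (by omega)]
      rfl
    have hkey := booleanKey m hm EA0 (fun l => e 1 l (t 1)) hEE0 hEu0 huu1
      Φ.toAddMonoidHom (φ 0) (ψ 0) (G 0) hval0 (fun x => j 0 x) hJ0
    have hspan : Submodule.span ℂ ((Submonoid.closure (G 0) : Submonoid (A 0)) : Set (A 0)) = ⊤ := by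
      have h := Algebra.adjoin_eq_span ℂ (G 0)
      rw [hA 0] at h
      rw [← h]
      rfl
    have heq : Φ.comp (j 0).toAlgHom.toLinearMap = φ 0 := by
      apply LinearMap.ext_on hspan
      intro w hw
      obtain ⟨l, hl, rfl⟩ := Submonoid.exists_list_of_mem_closure hw
      show Φ (j 0 l.prod) = φ 0 l.prod
      rw [map_list_prod (j 0) l]
      have h1 := hkey l hl (fun _ => 1) (fun _ => one_mem _) (fun _ => 0)
      rw [ordProd_eq_one 1 m (fun k _ _ => map_one (EA0 k)),
        ordProd_eq_one 1 m (fun l _ _ => pow_zero _), one_mul, one_mul] at h1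
      rw [show (List.map (⇑(j 0)) l).prod = (List.map (fun x => j 0 x) l).prod from rfl]
      rw [show Φ ((List.map (fun x => j 0 x) l).prod)
          = Φ.toAddMonoidHom ((List.map (fun x => j 0 x) l).prod) from rfl, h1]
      rw [ordProd_head _ 1 m hm]
      rw [ordProd_eq_one 2 m (fun k hk2 hkm => by
        rw [if_neg (by omega), Function.update_of_ne (by omega)]
        exact (hψ 0).1), mul_one]
      rw [if_pos rfl, Function.update_self, one_mul]
    exact fun x => LinearMap.congr_fun heq x
  · -- the second marginal
    have hEE1 : ∀ k k', k ≠ k' → ∀ x y, Commute (EA1 k x) (EA1 k' y) :=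
      fun k k' h x y => hcomm 1 1 k k' (hsame 1 k k' h) _ _
    have hEu1 : ∀ k l x, Commute (EA1 k x) (e 0 l (t 0)) :=
      fun k l x => hcomm 1 0 k l (h10 k l) _ _
    have huu0 : ∀ l l', Commute (e 0 l (t 0)) (e 0 l' (t 0)) := by
      intro l l'
      by_cases h : l = l'
      · subst h; exact Commute.refl _
      · exact hcomm 0 0 l l' (hsame 0 l l' h) _ _
    have hval1 : ∀ Y : ℕ → A 1, (∀ k, Y k ∈ Submonoid.closure (G 1)) → ∀ N : ℕ → ℕ,
        Φ.toAddMonoidHom (ordProd (fun k => EA1 k (Y k)) 1 m *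
            ordProd (fun l => e 0 l (t 0) ^ N l) 1 m) =
          ordProd (fun k => if k = 1 then φ 1 (Y k) else ψ 1 (Y k)) 1 m := by
      intro Y hY N
      show Φ (ordProd (fun k => e 1 k (ι 1 (Y k))) 1 m *
            ordProd (fun l => e 0 l (t 0) ^ N l) 1 m) = _
      rw [show ordProd (fun l => e 0 l (t 0) ^ N l) 1 m
            = ordProd (fun l => e 0 l (t 0 ^ N l)) 1 m from
          ordProd_congr 1 m (fun l _ _ => (map_pow (e 0 l) (t 0) (N l)).symm)]
      have hsw : Commute (ordProd (fun k => e 1 k (ι 1 (Y k))) 1 m)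
          (ordProd (fun l => e 0 l (t 0 ^ N l)) 1 m) :=
        ordProd_comm _ _ 1 m 1 m (fun l l' _ _ _ _ => hcomm 1 0 l l' (h10 l l') _ _)
      rw [hsw.eq]
      rw [hΦ]
      rw [ordProd_eq_one 1 m (f := fun k => if k = 1 then φt 0 (t 0 ^ N k) else ψt 0 (t 0 ^ N k))
        (fun k _ _ => by
          by_cases hk : k = 1 <;>
            simp [hk, (hφt 0).pow_eq_one, (hψt 0).pow_eq_one]), one_mul]
      refine ordProd_congr 1 m (fun k _ _ => ?_)
      by_cases hk : k = 1
      · rw [if_pos hk, if_pos hk]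
        exact (hφt 1).map_closure (hφ 1).1 (map_one (ι 1)) (hY k)
      · rw [if_neg hk, if_neg hk]
        exact (hψt 1).map_closure (hψ 1).1 (map_one (ι 1)) (hY k)
    have hJ1 : ∀ b ∈ G 1, (fun x => j 1 x) b = ∑ k ∈ Finset.Icc 1 m,
        ((if 1 ≤ k ∧ k ≤ m then EA1 k b else 0) -
          (if 1 ≤ k + 1 ∧ k + 1 ≤ m then EA1 (k + 1) b else 0)) *
          ordProd (fun l => e 0 l (t 0)) k m := by
      intro b hb
      refine (hj2 b hb).trans ?_
      refine Finset.sum_congr rfl (fun k hk => ?_)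
      rw [Finset.mem_Icc] at hk
      rw [show tBlock (fun l => e 0 l (t 0)) k m = ordProd (fun l => e 0 l (t 0)) k m from
        if_neg (by omega)]
      have hcom : ∀ c, Commute (ordProd (fun l => e 0 l (t 0)) k m)
          (embSite (fun l x => e 1 l x) m c (ι 1 b)) := by
        intro c
        unfold embSite
        split
        · exact (Commute.ordProd_right _ (e 1 c (ι 1 b)) k m
            (fun l _ _ => hcomm 1 0 c l (h10 c l) _ _)).symm
        · exact Commute.zero_right _
      rw [((hcom k).sub_right (hcom (k + 1))).eq]
      rfl
    have hkey := booleanKey m hm EA1 (fun l => e 0 l (t 0)) hEE1 hEu1 huu0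
      Φ.toAddMonoidHom (φ 1) (ψ 1) (G 1) hval1 (fun x => j 1 x) hJ1
    have hspan : Submodule.span ℂ ((Submonoid.closure (G 1) : Submonoid (A 1)) : Set (A 1)) = ⊤ := by
      have h := Algebra.adjoin_eq_span ℂ (G 1)
      rw [hA 1] at h
      rw [← h]
      rfl
    have heq : Φ.comp (j 1).toAlgHom.toLinearMap = φ 1 := by
      apply LinearMap.ext_on hspan
      intro w hw
      obtain ⟨l, hl, rfl⟩ := Submonoid.exists_list_of_mem_closure hw
      show Φ (j 1 l.prod) = φ 1 l.prod
      rw [map_list_prod (j 1) l]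
      have h1 := hkey l hl (fun _ => 1) (fun _ => one_mem _) (fun _ => 0)
      rw [ordProd_eq_one 1 m (fun k _ _ => map_one (EA1 k)),
        ordProd_eq_one 1 m (fun l _ _ => pow_zero _), one_mul, one_mul] at h1
      rw [show (List.map (⇑(j 1)) l).prod = (List.map (fun x => j 1 x) l).prod from rfl]
      rw [show Φ ((List.map (fun x => j 1 x) l).prod)
          = Φ.toAddMonoidHom ((List.map (fun x => j 1 x) l).prod) from rfl, h1]
      rw [ordProd_head _ 1 m hm]
      rw [ordProd_eq_one 2 m (fun k hk2 hkm => by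
        rw [if_neg (by omega), Function.update_of_ne (by omega)]
        exact (hψ 1).1), mul_one]
      rw [if_pos rfl, Function.update_self, one_mul]
    exact fun x => LinearMap.congr_fun heq x
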